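/- Let X ∈ S^n_+, Y ∈ N_{S^n_+}(X), A = X + Y with eigenvalue decomposition as in (eq:eig-decomp), and index sets α, β, γ. Then the set {H ∈ S^n : P_β^T H P_β ∈ S^{|β|}_+, P_β^T H P_γ = 0, P_γ^T H P_γ = 0} is a closed convex cone contained in the tangent cone T_{S^n_+}(X) intersected with Y^⊥. -/

import Mathlib

open Matrix BigOperators Finset


lemma auxA {n : ℕ} (A : Matrix (Fin n) (Fin n) ℝ) (h : (Aᵀ * A).trace = 0) : A = 0 := by
  have hsum : ∑ i : Fin n, ∑ j : Fin n, (A j i)^2 = 0 := by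
    rw [← h, Matrix.trace]
    simp [Matrix.diag, Matrix.mul_apply, sq]
  ext i j
  have h1 : ∀ k ∈ Finset.univ, (0:ℝ) ≤ ∑ l : Fin n, (A l k)^2 :=
    fun k _ => Finset.sum_nonneg fun l _ => sq_nonneg _
  have h2 := (Finset.sum_eq_zero_iff_of_nonneg h1).mp hsum j (Finset.mem_univ j)
  have h3 : ∀ l ∈ Finset.univ, (0:ℝ) ≤ (A l j)^2 := fun l _ => sq_nonneg _
  have := (Finset.sum_eq_zero_iff_of_nonneg h3).mp h2 i (Finset.mem_univ i)
  simpa [sq] using pow_eq_zero_iff (n := 2) (by norm_num) |>.mp this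


open scoped MatrixOrder in
lemma auxB {n : ℕ} {X N : Matrix (Fin n) (Fin n) ℝ} (hX : X.PosSemidef) (hN : N.PosSemidef)
    (h : (X * N).trace = 0) : N * X = 0 := by
  set S := CFC.sqrt X with hS
  set T := CFC.sqrt N with hT
  have hSsymm : Sᵀ = S := by
    rw [← conjTranspose_eq_transpose_of_trivial]; exact (CFC.sqrt_nonneg X).posSemidef.isHermitian
  have hTsymm : Tᵀ = T := by
    rw [← conjTranspose_eq_transpose_of_trivial]; exact (CFC.sqrt_nonneg N).posSemidef.isHermitian
  have hSS : S * S = X := CFC.sqrt_mul_sqrt_self X hX.nonneg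
  have hTT : T * T = N := CFC.sqrt_mul_sqrt_self N hN.nonneg
  have key : ((T * S)ᵀ * (T * S)).trace = 0 := by
    have : (T * S)ᵀ * (T * S) = S * N * S := by
      rw [Matrix.transpose_mul, hSsymm, hTsymm, ← hTT]
      noncomm_ring
    rw [this, Matrix.trace_mul_comm (S * N) S, ← Matrix.mul_assoc, hSS, h]
  have hTS : T * S = 0 := auxA _ key
  calc N * X = T * (T * S) * S := by rw [← hSS, ← hTT]; noncomm_ring
    _ = 0 := by rw [hTS]; simp

lemma psd_diag_nonneg {n : ℕ} {W : Matrix (Fin n) (Fin n) ℝ} (hW : W.PosSemidef) (i : Fin n) :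
    0 ≤ W i i := by
  exact hW.diag_nonneg

-- rows with lam i ≤ 0 of W vanish, given W PSD, W * (diagonal lam) = W * W (i.e. W*Z = 0 form)
lemma row_zero {n : ℕ} {W : Matrix (Fin n) (Fin n) ℝ} {lam : Fin n → ℝ}
    (hW : W.PosSemidef) (hWD : W * Matrix.diagonal lam = W * W)
    {i : Fin n} (hi : lam i ≤ 0) : ∀ k, W i k = 0 := by
  have hWsymm : Wᵀ = W := by
    rw [← conjTranspose_eq_transpose_of_trivial]; exact hW.isHermitian
  have hdiag : (W * W) i i = W i i * lam i := by
    rw [← hWD, Matrix.mul_apply]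
    simp [Matrix.diagonal_apply]
  have hsq : ∑ k, (W i k)^2 = W i i * lam i := by
    rw [← hdiag, Matrix.mul_apply]
    congr 1; ext k
    rw [sq]
    congr 1
    exact (congrFun (congrFun hWsymm.symm i) k).trans rfl
  have h0 : ∑ k, (W i k)^2 ≤ 0 := by
    rw [hsq]
    exact mul_nonpos_of_nonneg_of_nonpos (psd_diag_nonneg hW i) hi
  have h1 : ∑ k, (W i k)^2 = 0 :=
    le_antisymm h0 (Finset.sum_nonneg fun k _ => sq_nonneg _)
  intro k
  have := (Finset.sum_eq_zero_iff_of_nonneg (fun k _ => sq_nonneg (W i k))).mp h1 k (Finset.mem_univ k)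
  exact pow_eq_zero_iff (by norm_num) |>.mp this

lemma auxC {n : ℕ} {W Z : Matrix (Fin n) (Fin n) ℝ} {lam : Fin n → ℝ}
    (hW : W.PosSemidef) (hZ : (-Z).PosSemidef) (hWZ : W * Z = 0)
    (hsum : W + Z = Matrix.diagonal lam) :
    Z = Matrix.diagonal (fun i => min (lam i) 0) ∧
    W = Matrix.diagonal (fun i => max (lam i) 0) := by
  have hWsymm : Wᵀ = W := by
    rw [← conjTranspose_eq_transpose_of_trivial]; exact hW.isHermitian
  have hZsymm : Zᵀ = Z := by
    have h := hZ.isHermitian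
    rw [Matrix.IsHermitian, conjTranspose_eq_transpose_of_trivial] at h
    have := congrArg Neg.neg h
    simpa using this
  have hZW : Z * W = 0 := by
    have := congrArg Matrix.transpose hWZ
    simpa [Matrix.transpose_mul, hWsymm, hZsymm] using this
  -- W * D = W * W
  have hWD : W * Matrix.diagonal lam = W * W := by
    rw [← hsum, Matrix.mul_add, hWZ]; simp
  have hZD : (-Z) * Matrix.diagonal (fun i => -lam i) = (-Z) * (-Z) := by
    have : Z * Matrix.diagonal lam = Z * Z := by
      rw [← hsum, Matrix.mul_add, hZW]; simp
    have hd : Matrix.diagonal (fun i => -lam i) = -Matrix.diagonal lam := by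
      simp [Matrix.diagonal_neg]
    rw [hd]
    simp only [Matrix.neg_mul, Matrix.mul_neg, neg_neg]
    exact this
  have hWrow : ∀ i, lam i ≤ 0 → ∀ k, W i k = 0 := fun i hi => row_zero hW hWD hi
  have hZrow : ∀ i, 0 ≤ lam i → ∀ k, Z i k = 0 := by
    intro i hi k
    have := row_zero hZ hZD (i := i) (by simpa using hi) k
    simpa using this
  have hZeq : Z = Matrix.diagonal (fun i => min (lam i) 0) := by
    ext i j
    rcases le_or_gt 0 (lam i) with hi | hi
    · rw [hZrow i hi j]
      by_cases h : i = j
      · subst h; simp [Matrix.diagonal_apply, min_eq_right hi]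
      · simp [Matrix.diagonal_apply, h]
    · rcases le_or_gt 0 (lam j) with hj | hj
      · have : Z j i = 0 := hZrow j hj i
        have h2 : Z i j = Z j i := by
          conv_lhs => rw [← hZsymm, Matrix.transpose_apply]
        rw [h2, this]
        have h : i ≠ j := fun h => by subst h; exact absurd hj (not_le.mpr hi)
        simp [Matrix.diagonal_apply, h]
      · -- both negative: W i j = 0, so Z i j = diagonal lam i j
        have hw : W i j = 0 := hWrow i hi.le j
        have := congrFun (congrFun hsum i) j
        simp only [Matrix.add_apply, hw, zero_add] at this
        rw [this]
        by_cases h : i = j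
        · subst h; simp [Matrix.diagonal_apply, min_eq_left hi.le]
        · simp [Matrix.diagonal_apply, h]
  refine ⟨hZeq, ?_⟩
  have : W = Matrix.diagonal lam - Z := by rw [← hsum]; abel
  rw [this, hZeq, Matrix.diagonal_sub]
  have hfun : (fun i => lam i - min (lam i) 0) = fun i => max (lam i) 0 := by
    funext i
    rcases le_or_gt 0 (lam i) with hi | hi
    · rw [min_eq_right hi, max_eq_left hi, sub_zero]
    · rw [min_eq_left hi.le, max_eq_right hi.le, sub_self]
  rw [hfun]

lemma dsum_lower {n : ℕ} (M : Matrix (Fin n) (Fin n) ℝ) (x : Fin n → ℝ) (C : ℝ)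
    (hMC : ∀ i j, |M i j| ≤ C) (s u : Finset (Fin n)) :
    -(C * (∑ i ∈ s, |x i|) * (∑ j ∈ u, |x j|)) ≤ ∑ i ∈ s, ∑ j ∈ u, x i * M i j * x j := by
  have per : ∀ i ∈ s, ∀ j ∈ u, -(|x i| * C * |x j|) ≤ x i * M i j * x j := by
    intro i _ j _
    have h1 : |x i * M i j * x j| ≤ |x i| * C * |x j| := by
      rw [abs_mul, abs_mul]
      exact mul_le_mul_of_nonneg_right
        (mul_le_mul_of_nonneg_left (hMC i j) (abs_nonneg _)) (abs_nonneg _)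
    linarith [neg_abs_le (x i * M i j * x j)]
  have hE : ∑ i ∈ s, ∑ j ∈ u, |x i| * C * |x j| = C * (∑ i ∈ s, |x i|) * (∑ j ∈ u, |x j|) := by
    rw [Finset.sum_comm]
    simp_rw [← Finset.sum_mul, ← Finset.mul_sum]
    ring
  calc -(C * (∑ i ∈ s, |x i|) * (∑ j ∈ u, |x j|))
      = ∑ i ∈ s, ∑ j ∈ u, -(|x i| * C * |x j|) := by
        simp only [Finset.sum_neg_distrib]; rw [hE]
    _ ≤ ∑ i ∈ s, ∑ j ∈ u, x i * M i j * x j :=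
        Finset.sum_le_sum fun i hi => Finset.sum_le_sum fun j hj => per i hi j hj


lemma auxD {n : ℕ} (M : Matrix (Fin n) (Fin n) ℝ) (lam : Fin n → ℝ)
    (hMsymm : M.IsSymm)
    (hββ : ∀ v : Fin n → ℝ, 0 ≤ ∑ i ∈ Finset.univ.filter (fun i => lam i = 0),
        ∑ j ∈ Finset.univ.filter (fun j => lam j = 0), v i * M i j * v j)
    (hβγ : ∀ i, lam i = 0 → ∀ j, lam j < 0 → M i j = 0)
    (hγγ : ∀ i, lam i < 0 → ∀ j, lam j < 0 → M i j = 0) :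
    ∃ c : ℝ, 0 ≤ c ∧ ∃ t0 : ℝ, 0 < t0 ∧ ∀ t : ℝ, 0 < t → t ≤ t0 →
      (Matrix.diagonal (fun i => max (lam i) 0) + t • M +
        (t^2 * c) • Matrix.diagonal (fun i => if lam i ≤ 0 then (1:ℝ) else 0)).PosSemidef := by
  classical
  set α : Finset (Fin n) := Finset.univ.filter (fun i => 0 < lam i) with hαdef
  set b : Finset (Fin n) := Finset.univ.filter (fun i => lam i ≤ 0) with hbdef
  set β : Finset (Fin n) := Finset.univ.filter (fun i => lam i = 0) with hβdef
  set γ : Finset (Fin n) := Finset.univ.filter (fun i => lam i < 0) with hγdef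
  set C : ℝ := (∑ i, ∑ j, |M i j|) + 1 with hCdef
  have hC1 : 1 ≤ C := by
    have : 0 ≤ ∑ i, ∑ j, |M i j| :=
      Finset.sum_nonneg fun i _ => Finset.sum_nonneg fun j _ => abs_nonneg _
    linarith
  have hC0 : 0 ≤ C := by linarith
  have hMC : ∀ i j, |M i j| ≤ C := by
    intro i j
    have h1 : |M i j| ≤ ∑ j', |M i j'| :=
      Finset.single_le_sum (f := fun j' => |M i j'|) (fun j' _ => abs_nonneg _) (Finset.mem_univ j)
    have h2 : ∑ j', |M i j'| ≤ ∑ i', ∑ j', |M i' j'| :=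
      Finset.single_le_sum (f := fun i' => ∑ j', |M i' j'|)
        (fun i' _ => Finset.sum_nonneg fun j' _ => abs_nonneg _) (Finset.mem_univ i)
    linarith
  set L : ℝ := if h : α.Nonempty then (α.image lam).min' (h.image lam) else 1 with hLdef
  have hL : 0 < L := by
    rw [hLdef]
    split_ifs with h
    · obtain ⟨i, hi, hieq⟩ := Finset.mem_image.mp ((α.image lam).min'_mem (h.image lam))
      rw [← hieq]
      exact (Finset.mem_filter.mp hi).2
    · norm_num
  have hLle : ∀ i ∈ α, L ≤ lam i := by
    intro i hi
    rw [hLdef]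
    rw [dif_pos ⟨i, hi⟩]
    exact Finset.min'_le _ _ (Finset.mem_image_of_mem lam hi)
  set n' : ℝ := (n : ℝ) + 1 with hn'def
  have hn'1 : 1 ≤ n' := by
    rw [hn'def]; linarith [Nat.cast_nonneg (α := ℝ) n]
  have hn'0 : 0 < n' := by positivity
  refine ⟨4 * C^2 * n'^2 / L, by positivity, L / (4 * C * n'), by positivity, ?_⟩
  intro t ht ht0
  set c : ℝ := 4 * C^2 * n'^2 / L with hcdef
  have hcL : c * L = 4 * C^2 * n'^2 := by
    rw [hcdef]; field_simp
  have ht4 : t * (4 * C * n') ≤ L := by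
    rw [← le_div_iff₀ (by positivity)] at *
    exact ht0
  refine Matrix.PosSemidef.of_dotProduct_mulVec_nonneg ?_ ?_
  · -- Hermitian
    rw [Matrix.IsHermitian, conjTranspose_eq_transpose_of_trivial]
    rw [Matrix.transpose_add, Matrix.transpose_add, Matrix.transpose_smul, Matrix.transpose_smul,
      Matrix.diagonal_transpose, Matrix.diagonal_transpose, hMsymm.eq]
  · intro x
    rw [star_trivial]
    -- expand the quadratic form
    have hexp : x ⬝ᵥ ((Matrix.diagonal (fun i => max (lam i) 0) + t • M +
        (t^2 * c) • Matrix.diagonal (fun i => if lam i ≤ 0 then (1:ℝ) else 0)) *ᵥ x)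
        = (∑ i, max (lam i) 0 * x i ^ 2) + t * (∑ i, ∑ j, x i * M i j * x j)
          + (t^2 * c) * (∑ i ∈ b, x i ^ 2) := by
      rw [Matrix.add_mulVec, Matrix.add_mulVec, Matrix.smul_mulVec,
        Matrix.smul_mulVec, dotProduct_add, dotProduct_add,
        dotProduct_smul, dotProduct_smul]
      congr 1
      · congr 1
        · rw [dotProduct]
          apply Finset.sum_congr rfl
          intro i _
          rw [Matrix.mulVec_diagonal]
          ring
        · rw [smul_eq_mul]
          congr 1
          calc x ⬝ᵥ (M *ᵥ x) = ∑ i, x i * ∑ j, M i j * x j := by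
                simp [dotProduct, Matrix.mulVec]
            _ = ∑ i, ∑ j, x i * M i j * x j := by
                apply Finset.sum_congr rfl; intro i _
                rw [Finset.mul_sum]
                apply Finset.sum_congr rfl; intro j _
                ring
      · rw [smul_eq_mul]
        congr 1
        rw [dotProduct]
        rw [hbdef, Finset.sum_filter]
        apply Finset.sum_congr rfl
        intro i _
        rw [Matrix.mulVec_diagonal]
        by_cases h : lam i ≤ 0 <;> simp [h] <;> ring
    rw [hexp]
    set Sa := ∑ i ∈ α, x i ^ 2 with hSadef
    set Sb := ∑ i ∈ b, x i ^ 2 with hSbdef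
    set Ta := ∑ i ∈ α, |x i| with hTadef
    set Tb := ∑ i ∈ b, |x i| with hTbdef
    have hSa0 : 0 ≤ Sa := Finset.sum_nonneg fun i _ => sq_nonneg _
    have hSb0 : 0 ≤ Sb := Finset.sum_nonneg fun i _ => sq_nonneg _
    have hTa0 : 0 ≤ Ta := Finset.sum_nonneg fun i _ => abs_nonneg _
    have hTb0 : 0 ≤ Tb := Finset.sum_nonneg fun i _ => abs_nonneg _
    have hcard : ∀ s : Finset (Fin n), (s.card : ℝ) ≤ n' := by
      intro s
      rw [hn'def]
      have := Finset.card_le_univ s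
      have h2 : (s.card : ℝ) ≤ (n : ℝ) := by
        exact_mod_cast le_trans this (le_of_eq (Fintype.card_fin n))
      linarith
    have hCS : ∀ s : Finset (Fin n),
        (∑ i ∈ s, |x i|) * (∑ i ∈ s, |x i|) ≤ n' * (∑ i ∈ s, x i ^ 2) := by
      intro s
      have h := sq_sum_le_card_mul_sum_sq (s := s) (f := fun i => |x i|)
      simp_rw [sq_abs] at h
      rw [← sq]
      calc (∑ i ∈ s, |x i|) ^ 2 ≤ (s.card : ℝ) * (∑ i ∈ s, x i ^ 2) := h
        _ ≤ n' * (∑ i ∈ s, x i ^ 2) :=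
          mul_le_mul_of_nonneg_right (hcard s) (Finset.sum_nonneg fun i _ => sq_nonneg _)
    have hCSa : Ta * Ta ≤ n' * Sa := hCS α
    have hCSb : Tb * Tb ≤ n' * Sb := hCS b
    have hbcompl : Finset.univ.filter (fun i => ¬ 0 < lam i) = b := by
      rw [hbdef]; ext i; simp [not_lt]
    have houter : ∀ g : Fin n → ℝ, ∑ i, g i = ∑ i ∈ α, g i + ∑ i ∈ b, g i := by
      intro g
      rw [← hbcompl, hαdef]
      exact (Finset.sum_filter_add_sum_filter_not Finset.univ _ g).symm
    have hsplit : (∑ i, ∑ j, x i * M i j * x j)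
        = ((∑ i ∈ α, ∑ j ∈ α, x i * M i j * x j) + (∑ i ∈ α, ∑ j ∈ b, x i * M i j * x j))
          + ((∑ i ∈ b, ∑ j ∈ α, x i * M i j * x j) + (∑ i ∈ b, ∑ j ∈ b, x i * M i j * x j)) := by
      rw [houter (fun i => ∑ j, x i * M i j * x j)]
      congr 1
      · rw [← Finset.sum_add_distrib]
        exact Finset.sum_congr rfl fun i _ => houter _
      · rw [← Finset.sum_add_distrib]
        exact Finset.sum_congr rfl fun i _ => houter _
    have hA4 : 0 ≤ ∑ i ∈ b, ∑ j ∈ b, x i * M i j * x j := by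
      have hbu : b = β ∪ γ := by
        rw [hbdef, hβdef, hγdef]
        ext i
        simp only [Finset.mem_union, Finset.mem_filter, Finset.mem_univ, true_and]
        constructor
        · intro h
          rcases h.lt_or_eq with h' | h'
          · exact Or.inr h'
          · exact Or.inl h'
        · rintro (h | h)
          · exact le_of_eq h
          · exact le_of_lt h
      have hdisj : Disjoint β γ := by
        rw [Finset.disjoint_left]
        intro i hi hγi
        rw [hβdef] at hi
        rw [hγdef] at hγi
        have h1 := (Finset.mem_filter.mp hi).2
        have h2 := (Finset.mem_filter.mp hγi).2
        rw [h1] at h2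
        exact lt_irrefl 0 h2
      have z1 : ∑ i ∈ β, ∑ j ∈ γ, x i * M i j * x j = 0 :=
        Finset.sum_eq_zero fun i hi => Finset.sum_eq_zero fun j hj => by
          rw [hβγ i (Finset.mem_filter.mp hi).2 j (Finset.mem_filter.mp hj).2]; ring
      have z2 : ∑ i ∈ γ, ∑ j ∈ β, x i * M i j * x j = 0 :=
        Finset.sum_eq_zero fun i hi => Finset.sum_eq_zero fun j hj => by
          rw [← hMsymm.apply i j, hβγ j (Finset.mem_filter.mp hj).2 i (Finset.mem_filter.mp hi).2]
          ring
      have z3 : ∑ i ∈ γ, ∑ j ∈ γ, x i * M i j * x j = 0 :=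
        Finset.sum_eq_zero fun i hi => Finset.sum_eq_zero fun j hj => by
          rw [hγγ i (Finset.mem_filter.mp hi).2 j (Finset.mem_filter.mp hj).2]; ring
      rw [hbu, Finset.sum_union hdisj]
      simp_rw [Finset.sum_union hdisj]
      rw [Finset.sum_add_distrib, Finset.sum_add_distrib, z1, z2, z3]
      simpa using hββ x
    have hA1 := dsum_lower M x C hMC α α
    have hA2 := dsum_lower M x C hMC α b
    have hA3 := dsum_lower M x C hMC b α
    have h1 : L * Sa ≤ ∑ i, max (lam i) 0 * x i ^ 2 := by
      rw [houter (fun i => max (lam i) 0 * x i ^ 2)]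
      have hzero : ∑ i ∈ b, max (lam i) 0 * x i ^ 2 = 0 :=
        Finset.sum_eq_zero fun i hi => by
          rw [hbdef] at hi
          rw [max_eq_right (Finset.mem_filter.mp hi).2, zero_mul]
      rw [hzero, add_zero, hSadef, Finset.mul_sum]
      exact Finset.sum_le_sum fun i hi => mul_le_mul_of_nonneg_right
        (le_trans (hLle i hi) (le_max_left _ _)) (sq_nonneg _)
    have htDS : t * (-(C * Ta * Ta) + -(C * Ta * Tb) + (-(C * Tb * Ta) + 0))
        ≤ t * (∑ i, ∑ j, x i * M i j * x j) := by
      apply mul_le_mul_of_nonneg_left _ ht.le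
      rw [hsplit]
      exact add_le_add (add_le_add hA1 hA2) (add_le_add hA3 hA4)
    clear_value Sa Sb Ta Tb C L n' c
    clear hexp hsplit hA1 hA2 hA3 hA4 hCS hcard houter hbcompl hCdef hLdef hcdef hαdef hbdef hβdef hγdef hββ hβγ hγγ hMC hMsymm hSadef hSbdef hTadef hTbdef hn'def
    have hb1 : L * (t * C * (Ta * Ta)) ≤ L * L / 4 * Sa := by
      have e1 : t * C * (Ta * Ta) ≤ t * C * (n' * Sa) :=
        mul_le_mul_of_nonneg_left hCSa (by positivity)
      have e2 : L * (t * C * (n' * Sa)) ≤ L * L / 4 * Sa := by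
        nlinarith [mul_le_mul_of_nonneg_left ht4 (mul_nonneg hL.le hSa0)]
      calc L * (t * C * (Ta * Ta)) ≤ L * (t * C * (n' * Sa)) :=
            mul_le_mul_of_nonneg_left e1 hL.le
        _ ≤ L * L / 4 * Sa := e2
    have hb2 : L * (2 * (t * C * (Ta * Tb))) ≤ L * L / 2 * Sa + 2 * n'^2 * t^2 * C^2 * Sb := by
      nlinarith [sq_nonneg (L * Ta - 2 * n' * t * C * Tb), hn'0, hL.le, hSa0, hSb0,
        mul_le_mul_of_nonneg_left hCSa (mul_nonneg hL.le hL.le),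
        mul_le_mul_of_nonneg_left hCSb (by positivity : (0:ℝ) ≤ 4 * n'^2 * t^2 * C^2)]
    have hb3 : L * (t^2 * c * Sb) = 4 * C^2 * n'^2 * (t^2 * Sb) := by
      linear_combination (t^2 * Sb) * hcL
    have key : 0 ≤ L * (L * Sa - t * C * (Ta * Ta) - 2 * (t * C * (Ta * Tb)) + t^2 * c * Sb) := by
      linarith [hb1, hb2, hb3, mul_nonneg (mul_nonneg hL.le hL.le) hSa0,
        mul_nonneg (mul_nonneg (mul_nonneg (sq_nonneg n') (sq_nonneg t)) (sq_nonneg C)) hSb0]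
    have key2 : 0 ≤ L * Sa - t * C * (Ta * Ta) - 2 * (t * C * (Ta * Tb)) + t^2 * c * Sb := by
      exact nonneg_of_mul_nonneg_right key hL
    linarith [h1, htDS, key2]

/-- the critical cone of the PSD cone,
`{H symmetric : Pβᵀ H Pβ PSD, Pβᵀ H Pγ = 0, Pγᵀ H Pγ = 0}`,
is a closed convex cone contained in the (Bouligand) tangent cone of the PSD cone at `X`
intersected with the orthogonal complement of `Y`. -/
theorem stmt5 {n : ℕ} (X Y A P : Matrix (Fin n) (Fin n) ℝ) (lam : Fin n → ℝ)
    (hX : X.PosSemidef) (hYsymm : Y.IsSymm)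
    (hNC : ∀ X' : Matrix (Fin n) (Fin n) ℝ, X'.PosSemidef → ((X' - X) * Y).trace ≤ 0)
    (hA : A = X + Y) (hP : Pᵀ * P = 1) (hlam : Antitone lam)
    (hdecomp : A = P * Matrix.diagonal lam * Pᵀ) :
    let β : Finset (Fin n) := Finset.univ.filter (fun i => lam i = 0)
    let γ : Finset (Fin n) := Finset.univ.filter (fun i => lam i < 0)
    let C : Set (Matrix (Fin n) (Fin n) ℝ) :=
      {H | H.IsSymm
        ∧ (∀ v : Fin n → ℝ, 0 ≤ ∑ i ∈ β, ∑ j ∈ β, v i * (Pᵀ * H * P) i j * v j)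
        ∧ (∀ i ∈ β, ∀ j ∈ γ, (Pᵀ * H * P) i j = 0)
        ∧ (∀ i ∈ γ, ∀ j ∈ γ, (Pᵀ * H * P) i j = 0)}
    IsClosed C ∧ Convex ℝ C ∧ (∀ c : ℝ, 0 ≤ c → ∀ H ∈ C, c • H ∈ C)
    ∧ C ⊆ tangentConeAt ℝ {M : Matrix (Fin n) (Fin n) ℝ | M.PosSemidef} X
          ∩ {H | (Y * H).trace = 0} := by
  intro β γ C
  have hPPT : P * Pᵀ = 1 := mul_eq_one_comm.mp hP
  have hPH : Pᴴ = Pᵀ := conjTranspose_eq_transpose_of_trivial P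
  have hconj : ∀ B : Matrix (Fin n) (Fin n) ℝ, P * (Pᵀ * B * P) * Pᵀ = B := by
    intro B
    calc P * (Pᵀ * B * P) * Pᵀ = (P * Pᵀ) * B * (P * Pᵀ) := by
          simp only [Matrix.mul_assoc]
      _ = B := by rw [hPPT, Matrix.one_mul, Matrix.mul_one]
  refine ⟨?_, ?_, ?_, ?_⟩
  · -- closed
    have hcont : ∀ i j : Fin n, Continuous fun H : Matrix (Fin n) (Fin n) ℝ => (Pᵀ * H * P) i j :=
      fun i j => ((continuous_const.matrix_mul continuous_id).matrix_mul
        continuous_const).matrix_elem i j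
    have hCeq : C = {H : Matrix (Fin n) (Fin n) ℝ | H.IsSymm}
        ∩ ((⋂ v : Fin n → ℝ, {H | 0 ≤ ∑ i ∈ β, ∑ j ∈ β, v i * (Pᵀ * H * P) i j * v j})
          ∩ ((⋂ i ∈ β, ⋂ j ∈ γ, {H | (Pᵀ * H * P) i j = 0})
            ∩ (⋂ i ∈ γ, ⋂ j ∈ γ, {H | (Pᵀ * H * P) i j = 0}))) := by
      ext H
      simp only [Set.mem_inter_iff, Set.mem_iInter, Set.mem_setOf_eq]
      constructor
      · rintro ⟨a1, a2, a3, a4⟩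
        exact ⟨a1, a2, a3, a4⟩
      · rintro ⟨a1, a2, a3, a4⟩
        exact ⟨a1, a2, a3, a4⟩
    rw [hCeq]
    refine IsClosed.inter ?_ (IsClosed.inter ?_ (IsClosed.inter ?_ ?_))
    · have h1 : {H : Matrix (Fin n) (Fin n) ℝ | H.IsSymm}
          = {H : Matrix (Fin n) (Fin n) ℝ | Hᵀ = H} := rfl
      rw [h1]
      exact isClosed_eq (continuous_id.matrix_transpose) continuous_id
    · exact isClosed_iInter fun v => isClosed_le continuous_const
        (continuous_finset_sum _ fun i _ => continuous_finset_sum _ fun j _ =>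
          ((continuous_const.mul (hcont i j)).mul continuous_const))
    · exact isClosed_biInter fun i _ => isClosed_biInter fun j _ =>
        isClosed_eq (hcont i j) continuous_const
    · exact isClosed_biInter fun i _ => isClosed_biInter fun j _ =>
        isClosed_eq (hcont i j) continuous_const
  · -- convex
    intro H1 h1 H2 h2 a bb ha hb hab
    obtain ⟨s1, q1, z1, w1⟩ := h1
    obtain ⟨s2, q2, z2, w2⟩ := h2
    have hentry : ∀ i j : Fin n, (Pᵀ * (a • H1 + bb • H2) * P) i j
        = a * (Pᵀ * H1 * P) i j + bb * (Pᵀ * H2 * P) i j := by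
      intro i j
      rw [Matrix.mul_add, Matrix.add_mul, mul_smul_comm, smul_mul_assoc,
        mul_smul_comm, smul_mul_assoc]
      simp [Matrix.add_apply, Matrix.smul_apply, smul_eq_mul]
    refine ⟨?_, ?_, ?_, ?_⟩
    · show (a • H1 + bb • H2)ᵀ = a • H1 + bb • H2
      rw [Matrix.transpose_add, Matrix.transpose_smul, Matrix.transpose_smul, s1.eq, s2.eq]
    · intro v
      have hterm : ∀ i j, v i * (Pᵀ * (a • H1 + bb • H2) * P) i j * v j
          = a * (v i * (Pᵀ * H1 * P) i j * v j) + bb * (v i * (Pᵀ * H2 * P) i j * v j) := by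
        intro i j; rw [hentry]; ring
      calc (0:ℝ) ≤ a * (∑ i ∈ β, ∑ j ∈ β, v i * (Pᵀ * H1 * P) i j * v j)
            + bb * (∑ i ∈ β, ∑ j ∈ β, v i * (Pᵀ * H2 * P) i j * v j) :=
          add_nonneg (mul_nonneg ha (q1 v)) (mul_nonneg hb (q2 v))
        _ = ∑ i ∈ β, ∑ j ∈ β, v i * (Pᵀ * (a • H1 + bb • H2) * P) i j * v j := by
          rw [Finset.mul_sum, Finset.mul_sum, ← Finset.sum_add_distrib]
          apply Finset.sum_congr rfl; intro i _
          rw [Finset.mul_sum, Finset.mul_sum, ← Finset.sum_add_distrib]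
          apply Finset.sum_congr rfl; intro j _
          rw [hterm i j]
    · intro i hi j hj
      rw [hentry, z1 i hi j hj, z2 i hi j hj]; ring
    · intro i hi j hj
      rw [hentry, w1 i hi j hj, w2 i hi j hj]; ring
  · -- cone
    intro c0 hc0 H hH
    obtain ⟨s1, q1, z1, w1⟩ := hH
    have hentry : ∀ i j : Fin n, (Pᵀ * (c0 • H) * P) i j = c0 * (Pᵀ * H * P) i j := by
      intro i j
      rw [mul_smul_comm, smul_mul_assoc]
      simp [Matrix.smul_apply, smul_eq_mul]
    refine ⟨?_, ?_, ?_, ?_⟩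
    · show (c0 • H)ᵀ = c0 • H
      rw [Matrix.transpose_smul, s1.eq]
    · intro v
      have heq : ∑ i ∈ β, ∑ j ∈ β, v i * (Pᵀ * (c0 • H) * P) i j * v j
          = c0 * ∑ i ∈ β, ∑ j ∈ β, v i * (Pᵀ * H * P) i j * v j := by
        rw [Finset.mul_sum]; apply Finset.sum_congr rfl; intro i _
        rw [Finset.mul_sum]; apply Finset.sum_congr rfl; intro j _
        rw [hentry]; ring
      rw [heq]; exact mul_nonneg hc0 (q1 v)
    · intro i hi j hj; rw [hentry, z1 i hi j hj, mul_zero]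
    · intro i hi j hj; rw [hentry, w1 i hi j hj, mul_zero]
  · -- subset
    intro H hH
    obtain ⟨hHsymm, hββ, hβγ, hγγ⟩ := hH
    -- Y is negative semidefinite
    have hXsymm : Xᵀ = X := by
      rw [← conjTranspose_eq_transpose_of_trivial]; exact hX.isHermitian
    have hYnsd : (-Y).PosSemidef := by
      refine Matrix.PosSemidef.of_dotProduct_mulVec_nonneg ?_ ?_
      · show (-Y)ᴴ = -Y
        rw [conjTranspose_eq_transpose_of_trivial, Matrix.transpose_neg, hYsymm.eq]
      · intro v
        rw [star_trivial]
        have hvv : (Matrix.vecMulVec v v).PosSemidef := by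
          refine Matrix.PosSemidef.of_dotProduct_mulVec_nonneg ?_ ?_
          · show (Matrix.vecMulVec v v)ᴴ = Matrix.vecMulVec v v
            rw [conjTranspose_eq_transpose_of_trivial]
            ext i j
            simp [Matrix.vecMulVec_apply, mul_comm]
          · intro x
            rw [star_trivial]
            have : x ⬝ᵥ (Matrix.vecMulVec v v *ᵥ x) = (∑ i, v i * x i) * (∑ j, v j * x j) := by
              rw [Finset.sum_mul_sum, dotProduct]
              apply Finset.sum_congr rfl
              intro i _
              rw [Matrix.mulVec, dotProduct, Finset.mul_sum]
              apply Finset.sum_congr rfl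
              intro j _
              simp [Matrix.vecMulVec_apply]
              ring
            rw [this, ← sq]
            exact sq_nonneg _
        have h1 := hNC (X + Matrix.vecMulVec v v) (hX.add hvv)
        rw [add_sub_cancel_left] at h1
        have lhs : (Matrix.vecMulVec v v * Y).trace = ∑ i, ∑ k, v i * v k * Y k i := by
          rw [Matrix.trace]
          apply Finset.sum_congr rfl
          intro i _
          simp [Matrix.diag, Matrix.mul_apply, Matrix.vecMulVec_apply]
        have rhs1 : v ⬝ᵥ ((-Y) *ᵥ v) = ∑ i, ∑ k, -(v i * Y i k * v k) := by
          simp only [dotProduct, Matrix.mulVec, Matrix.neg_apply]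
          apply Finset.sum_congr rfl
          intro i _
          rw [Finset.mul_sum]
          apply Finset.sum_congr rfl
          intro k _
          ring
        have h2 : (Matrix.vecMulVec v v * Y).trace = -(v ⬝ᵥ ((-Y) *ᵥ v)) := by
          rw [lhs, rhs1]
          simp only [Finset.sum_neg_distrib, neg_neg]
          apply Finset.sum_congr rfl
          intro i _
          apply Finset.sum_congr rfl
          intro k _
          rw [hYsymm.apply i k]
          ring
        rw [h2] at h1
        linarith
    have htr0 : (X * Y).trace = 0 := by
      have h0 := hNC 0 Matrix.PosSemidef.zero
      have h2 := hNC (X + X) (hX.add hX)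
      rw [zero_sub, Matrix.neg_mul, Matrix.trace_neg] at h0
      rw [add_sub_cancel_left] at h2
      linarith
    have hYX : Y * X = 0 := by
      have h := auxB hX hYnsd (by rw [Matrix.mul_neg, Matrix.trace_neg, htr0, neg_zero])
      rw [Matrix.neg_mul, neg_eq_zero] at h
      exact h
    have hXY : X * Y = 0 := by
      have : X * Y = (Y * X)ᵀ := by
        rw [Matrix.transpose_mul, hXsymm, hYsymm.eq]
      rw [this, hYX, Matrix.transpose_zero]
    set W : Matrix (Fin n) (Fin n) ℝ := Pᵀ * X * P with hWdef
    set Z : Matrix (Fin n) (Fin n) ℝ := Pᵀ * Y * P with hZdef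
    set M : Matrix (Fin n) (Fin n) ℝ := Pᵀ * H * P with hMdef
    have hWpsd : W.PosSemidef := by
      rw [hWdef, ← hPH]; exact hX.conjTranspose_mul_mul_same P
    have hZnsd : (-Z).PosSemidef := by
      have : -Z = Pᵀ * (-Y) * P := by
        rw [hZdef, Matrix.mul_neg, Matrix.neg_mul]
      rw [this, ← hPH]
      exact hYnsd.conjTranspose_mul_mul_same P
    have hWZ : W * Z = 0 := by
      rw [hWdef, hZdef]
      calc Pᵀ * X * P * (Pᵀ * Y * P) = Pᵀ * (X * (P * Pᵀ) * Y) * P := by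
            simp only [Matrix.mul_assoc]
        _ = 0 := by rw [hPPT, Matrix.mul_one, hXY]; simp
    have hWZsum : W + Z = Matrix.diagonal lam := by
      rw [hWdef, hZdef]
      have h1 : Pᵀ * X * P + Pᵀ * Y * P = Pᵀ * A * P := by
        rw [hA, Matrix.mul_add, Matrix.add_mul]
      rw [h1, hdecomp]
      calc Pᵀ * (P * Matrix.diagonal lam * Pᵀ) * P
          = (Pᵀ * P) * Matrix.diagonal lam * (Pᵀ * P) := by simp only [Matrix.mul_assoc]
        _ = Matrix.diagonal lam := by rw [hP, Matrix.one_mul, Matrix.mul_one]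
    obtain ⟨hZeq, hWeq⟩ := auxC hWpsd hZnsd hWZ hWZsum
    have hXeq : X = P * Matrix.diagonal (fun i => max (lam i) 0) * Pᵀ := by
      rw [← hWeq, hWdef]; exact (hconj X).symm
    have hHeq : H = P * M * Pᵀ := by rw [hMdef]; exact (hconj H).symm
    have hYeq : Y = P * Matrix.diagonal (fun i => min (lam i) 0) * Pᵀ := by
      rw [← hZeq, hZdef]; exact (hconj Y).symm
    have hMsymm : M.IsSymm := by
      rw [Matrix.IsSymm, hMdef, Matrix.transpose_mul, Matrix.transpose_mul,
        Matrix.transpose_transpose, hHsymm.eq, Matrix.mul_assoc]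
    constructor
    · -- tangent cone
      show H ∈ tangentConeAt ℝ {M : Matrix (Fin n) (Fin n) ℝ | M.PosSemidef} X
      obtain ⟨c, hc0, t0, ht00, hpsd⟩ := auxD M lam hMsymm (fun v => hββ v)
        (fun i hi j hj => hβγ i (Finset.mem_filter.mpr ⟨Finset.mem_univ i, hi⟩) j
          (Finset.mem_filter.mpr ⟨Finset.mem_univ j, hj⟩))
        (fun i hi j hj => hγγ i (Finset.mem_filter.mpr ⟨Finset.mem_univ i, hi⟩) j
          (Finset.mem_filter.mpr ⟨Finset.mem_univ j, hj⟩))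
      have ht0ne : t0 ≠ 0 := ne_of_gt ht00
      set Q : Matrix (Fin n) (Fin n) ℝ :=
        P * Matrix.diagonal (fun i => if lam i ≤ 0 then (1:ℝ) else 0) * Pᵀ with hQdef
      refine mem_tangentConeAt_of_seq Filter.atTop (fun k : ℕ => ((k:ℝ)+1)/t0)
        (fun k : ℕ => (t0/((k:ℝ)+1)) • H + ((t0/((k:ℝ)+1))^2 * c) • Q) ?_ ?_ ?_
      swap
      · apply Filter.Eventually.of_forall
        intro k
        have hk1 : (0:ℝ) < (k:ℝ)+1 := by positivity
        have htpos : 0 < t0/((k:ℝ)+1) := by positivity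
        have htle : t0/((k:ℝ)+1) ≤ t0 :=
          div_le_self ht00.le (by linarith [Nat.cast_nonneg (α := ℝ) k])
        have hinner := hpsd (t0/((k:ℝ)+1)) htpos htle
        set t : ℝ := t0/((k:ℝ)+1) with htdef
        have heq : P * (Matrix.diagonal (fun i => max (lam i) 0) + t • M +
            (t^2*c) • Matrix.diagonal (fun i => if lam i ≤ 0 then (1:ℝ) else 0)) * Pᵀ
            = X + (t • H + (t^2*c) • Q) := by
          rw [Matrix.mul_add, Matrix.add_mul, Matrix.mul_add, Matrix.add_mul,
            mul_smul_comm, smul_mul_assoc, mul_smul_comm, smul_mul_assoc,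
            ← hXeq, ← hHeq, ← hQdef, add_assoc]
        have hps := hinner.mul_mul_conjTranspose_same P
        rw [hPH, heq] at hps
        exact hps
      · have hlim0 : Filter.Tendsto (fun k : ℕ => t0/((k:ℝ)+1)) Filter.atTop (nhds 0) := by
          apply Filter.Tendsto.div_atTop tendsto_const_nhds
          exact Filter.tendsto_atTop_add_const_right _ 1 tendsto_natCast_atTop_atTop
        have := (hlim0.smul_const H).add (((hlim0.pow 2).mul_const c).smul_const Q)
        simpa using this
      · have heq2 : ∀ k : ℕ, (((k:ℝ)+1)/t0) • ((t0/((k:ℝ)+1)) • H + ((t0/((k:ℝ)+1))^2*c) • Q)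
            = H + ((t0/((k:ℝ)+1))*c) • Q := by
          intro k
          have hk1 : ((k:ℝ)+1) ≠ 0 := by positivity
          rw [smul_add, smul_smul, smul_smul]
          have e1 : ((k:ℝ)+1)/t0 * (t0/((k:ℝ)+1)) = 1 := by field_simp
          have e2 : ((k:ℝ)+1)/t0 * ((t0/((k:ℝ)+1))^2*c) = (t0/((k:ℝ)+1))*c := by
            field_simp
          rw [e1, e2, one_smul]
        have hlim0 : Filter.Tendsto (fun k : ℕ => t0/((k:ℝ)+1)) Filter.atTop (nhds 0) := by
          apply Filter.Tendsto.div_atTop tendsto_const_nhds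
          exact Filter.tendsto_atTop_add_const_right _ 1 tendsto_natCast_atTop_atTop
        have hlim : Filter.Tendsto (fun k : ℕ => H + ((t0/((k:ℝ)+1))*c) • Q)
            Filter.atTop (nhds (H + ((0:ℝ)*c) • Q)) :=
          Filter.Tendsto.const_add H ((hlim0.mul_const c).smul_const Q)
        simp only [zero_mul, zero_smul, add_zero] at hlim
        exact Filter.Tendsto.congr (fun k => (heq2 k).symm) hlim
    · -- trace zero
      show (Y * H).trace = 0
      have hfact : Y * H = P * (Matrix.diagonal (fun i => min (lam i) 0) * M) * Pᵀ := by
        rw [hYeq, hHeq]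
        calc P * Matrix.diagonal (fun i => min (lam i) 0) * Pᵀ * (P * M * Pᵀ)
            = P * (Matrix.diagonal (fun i => min (lam i) 0) * (Pᵀ * P) * M) * Pᵀ := by
              simp only [Matrix.mul_assoc]
          _ = P * (Matrix.diagonal (fun i => min (lam i) 0) * M) * Pᵀ := by
              rw [hP, Matrix.mul_one]
      rw [hfact, Matrix.trace_mul_comm (P * (Matrix.diagonal (fun i => min (lam i) 0) * M)) Pᵀ,
        ← Matrix.mul_assoc, ← Matrix.mul_assoc, hP, Matrix.one_mul]
      rw [Matrix.trace]
      apply Finset.sum_eq_zero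
      intro i _
      rw [Matrix.diag, Matrix.diagonal_mul]
      rcases lt_or_ge (lam i) 0 with h | h
      · have : M i i = 0 := hγγ i (by simp [γ, h]) i (by simp [γ, h])
        rw [this, mul_zero]
      · rw [min_eq_right h, zero_mul]
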